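/- Let α ∈ (0,2) and let U_ap(φ) = (2 cos φ)^(−α) + 2^(1−α/2)·(1 + sin² φ)^(−α/2) for φ ∈ (−π/2, π/2). Then the derivative of U_ap vanishes at a point φ ∈ (0, π/2) if and only if φ = arctan(1/√2). In particular, φ̂ = arctan(1/√2) is a critical point of U_ap for every α ∈ (0,2). -/

import Mathlib

open Real

private lemma deriv_Uap (α : ℝ) {φ : ℝ} (hc : 0 < Real.cos φ) :
    deriv (fun φ : ℝ =>
        (2 * Real.cos φ) ^ (-α) + (2:ℝ) ^ (1 - α/2) * (1 + Real.sin φ ^ 2) ^ (-(α/2))) φ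
      = α * Real.sin φ * (2 * (2 * Real.cos φ) ^ (-α - 1)
          - (2:ℝ) ^ (1 - α/2) * Real.cos φ * (1 + Real.sin φ ^ 2) ^ (-(α/2) - 1)) := by
  have ha : (2 * Real.cos φ) ≠ 0 := by positivity
  have hb : (1 + Real.sin φ ^ 2) ≠ 0 := by positivity
  have h1 : HasDerivAt (fun φ : ℝ => 2 * Real.cos φ) (2 * -Real.sin φ) φ :=
    (Real.hasDerivAt_cos φ).const_mul 2
  have h2 : HasDerivAt (fun φ : ℝ => 1 + Real.sin φ ^ 2)
      (0 + 2 * Real.sin φ ^ 1 * Real.cos φ) φ :=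
    (hasDerivAt_const φ 1).add ((Real.hasDerivAt_sin φ).pow 2)
  have h1' := h1.rpow_const (p := -α) (Or.inl ha)
  have h2' := (h2.rpow_const (p := -(α/2)) (Or.inl hb)).const_mul ((2:ℝ) ^ (1 - α/2))
  have h : deriv (fun φ : ℝ =>
      (2 * Real.cos φ) ^ (-α) + (2:ℝ) ^ (1 - α/2) * (1 + Real.sin φ ^ 2) ^ (-(α/2))) φ = _ :=
    (h1'.add h2').deriv
  rw [h]; ring

-- the key algebraic equivalence
private lemma key_equiv (α : ℝ) (hα0 : 0 < α) {φ : ℝ} (hc : 0 < Real.cos φ) :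
    (2 * (2 * Real.cos φ) ^ (-α - 1)
        - (2:ℝ) ^ (1 - α/2) * Real.cos φ * (1 + Real.sin φ ^ 2) ^ (-(α/2) - 1) = 0)
      ↔ 1 + Real.sin φ ^ 2 = 2 * Real.cos φ ^ 2 := by
  set a : ℝ := 2 * Real.cos φ with hadef
  set b : ℝ := 1 + Real.sin φ ^ 2 with hbdef
  have ha : 0 < a := by positivity
  have hb : 0 < b := by positivity
  have hcpos : 0 < a ^ (α + 1) * b ^ (α/2 + 1) := by positivity
  rw [sub_eq_zero, ← mul_left_inj' hcpos.ne']
  have haa : a ^ (-α - 1) * a ^ (α + 1) = 1 := by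
    rw [← Real.rpow_add ha]; norm_num
  have hbb : b ^ (-(α/2) - 1) * b ^ (α/2 + 1) = 1 := by
    rw [← Real.rpow_add hb]; norm_num
  have hL : 2 * a ^ (-α - 1) * (a ^ (α + 1) * b ^ (α/2 + 1)) = 2 * b ^ (α/2 + 1) := by
    calc 2 * a ^ (-α - 1) * (a ^ (α + 1) * b ^ (α/2 + 1))
        = 2 * (a ^ (-α - 1) * a ^ (α + 1)) * b ^ (α/2 + 1) := by ring
      _ = 2 * b ^ (α/2 + 1) := by rw [haa]; ring
  have hR : (2:ℝ) ^ (1 - α/2) * Real.cos φ * b ^ (-(α/2) - 1)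
      * (a ^ (α + 1) * b ^ (α/2 + 1))
      = 2 * (2 * Real.cos φ ^ 2) ^ (α/2 + 1) := by
    have h1 : a ^ (α + 1) = (2:ℝ) ^ (α + 1) * Real.cos φ ^ (α + 1) :=
      Real.mul_rpow (by norm_num) hc.le
    have h2 : (2 * Real.cos φ ^ 2 : ℝ) ^ (α/2 + 1)
        = (2:ℝ) ^ (α/2 + 1) * (Real.cos φ ^ 2 : ℝ) ^ (α/2 + 1) :=
      Real.mul_rpow (by norm_num) (by positivity)
    have h3 : ((Real.cos φ ^ 2 : ℝ)) ^ (α/2 + 1) = Real.cos φ ^ (α + 2) := by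
      rw [← Real.rpow_natCast (Real.cos φ) 2, ← Real.rpow_mul hc.le]
      congr 1
      push_cast
      ring
    have h4 : Real.cos φ * Real.cos φ ^ (α + 1) = Real.cos φ ^ (α + 2) := by
      have h := (Real.rpow_add hc 1 (α + 1)).symm
      rw [Real.rpow_one] at h
      rw [h]
      congr 1
      ring
    have h5 : (2:ℝ) ^ (1 - α/2) * (2:ℝ) ^ (α + 1) = 2 * (2:ℝ) ^ (α/2 + 1) := by
      rw [← Real.rpow_add two_pos, show (1:ℝ) - α/2 + (α + 1) = 1 + (α/2 + 1) by ring,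
        Real.rpow_add two_pos, Real.rpow_one]
    calc (2:ℝ) ^ (1 - α/2) * Real.cos φ * b ^ (-(α/2) - 1)
          * (a ^ (α + 1) * b ^ (α/2 + 1))
        = ((2:ℝ) ^ (1 - α/2) * (2:ℝ) ^ (α + 1))
            * (Real.cos φ * Real.cos φ ^ (α + 1))
            * (b ^ (-(α/2) - 1) * b ^ (α/2 + 1)) := by rw [h1]; ring
      _ = (2 * (2:ℝ) ^ (α/2 + 1)) * Real.cos φ ^ (α + 2) * 1 := by rw [h5, h4, hbb]
      _ = 2 * (2 * Real.cos φ ^ 2) ^ (α/2 + 1) := by rw [h2, h3]; ring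
  rw [hL, hR, mul_right_inj' (two_ne_zero (α := ℝ)),
    Real.rpow_left_inj hb.le (by positivity) (by positivity)]

theorem tetrahedral_central_configuration_unique
    (α : ℝ) (hα : α ∈ Set.Ioo (0:ℝ) 2) :
    (∀ φ ∈ Set.Ioo (0:ℝ) (π/2),
      (deriv (fun φ : ℝ =>
          (2 * Real.cos φ) ^ (-α) + (2:ℝ) ^ (1 - α/2) * (1 + Real.sin φ ^ 2) ^ (-(α/2))) φ = 0 ↔
        φ = Real.arctan (1 / Real.sqrt 2))) ∧
    deriv (fun φ : ℝ =>
        (2 * Real.cos φ) ^ (-α) + (2:ℝ) ^ (1 - α/2) * (1 + Real.sin φ ^ 2) ^ (-(α/2)))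
      (Real.arctan (1 / Real.sqrt 2)) = 0 := by
  obtain ⟨hα0, hα2⟩ := hα
  have hu2 : (1 / Real.sqrt 2) ^ 2 = 1/2 := by
    rw [div_pow, Real.sq_sqrt (by norm_num : (0:ℝ) ≤ 2)]; norm_num
  have hmem : Real.arctan (1 / Real.sqrt 2) ∈ Set.Ioo (0:ℝ) (π/2) := by
    constructor
    · have : Real.arctan 0 < Real.arctan (1 / Real.sqrt 2) :=
        Real.arctan_strictMono (by positivity)
      simpa [Real.arctan_zero] using this
    · exact Real.arctan_lt_pi_div_two _
  have hkey : ∀ φ ∈ Set.Ioo (0:ℝ) (π/2),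
      (deriv (fun φ : ℝ =>
          (2 * Real.cos φ) ^ (-α) + (2:ℝ) ^ (1 - α/2) * (1 + Real.sin φ ^ 2) ^ (-(α/2))) φ = 0 ↔
        φ = Real.arctan (1 / Real.sqrt 2)) := by
    intro φ hφ
    obtain ⟨hφ0, hφπ⟩ := hφ
    have hc : 0 < Real.cos φ := Real.cos_pos_of_mem_Ioo ⟨by linarith [Real.pi_pos], hφπ⟩
    have hs : 0 < Real.sin φ := Real.sin_pos_of_pos_of_lt_pi hφ0 (by linarith [Real.pi_pos])
    rw [deriv_Uap α hc, mul_eq_zero, mul_eq_zero]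
    have hns : ¬ (α = 0 ∨ Real.sin φ = 0) := by
      push_neg; exact ⟨hα0.ne', hs.ne'⟩
    rw [or_iff_right hns, key_equiv α hα0 hc]
    have hsc := Real.sin_sq_add_cos_sq φ
    constructor
    · intro h
      have hsin2 : Real.sin φ ^ 2 = 1/3 := by nlinarith
      have hcos2 : Real.cos φ ^ 2 = 2/3 := by nlinarith
      have htpos : 0 < Real.tan φ := by
        rw [Real.tan_eq_sin_div_cos]; exact div_pos hs hc
      have ht2 : Real.tan φ ^ 2 = 1/2 := by
        rw [Real.tan_eq_sin_div_cos, div_pow, hsin2, hcos2]; norm_num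
      have hupos : 0 < 1 / Real.sqrt 2 := by positivity
      have hfac : (Real.tan φ - 1 / Real.sqrt 2) * (Real.tan φ + 1 / Real.sqrt 2) = 0 := by
        nlinarith [ht2, hu2]
      have htan : Real.tan φ = 1 / Real.sqrt 2 := by
        rcases mul_eq_zero.mp hfac with h' | h'
        · linarith
        · linarith
      rw [← htan]
      exact (Real.arctan_tan (by linarith) hφπ).symm
    · rintro rfl
      rw [Real.sin_arctan, Real.cos_arctan]
      norm_num [div_pow, Real.sq_sqrt]
  exact ⟨hkey, (hkey _ hmem).mpr rfl⟩
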